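/- Let s = 1/(2d), d ≥ 3, and for integer l ≥ 1 define η₂[l](x) = Σ_u D^{*2}(u) D(x-u) Σ_{s'} D(s')^l D(u-s') D^{*2}(x-s'). Then η₂[l](e_1) = s^{l+4}(5 − 2s − 8s²), η₂[l](2e_1+e_2) = 8 s^{l+6}, and η₂[l](e_1+e_2+e_3) = 24 s^{l+6}. -/

import Mathlib

open scoped BigOperators

noncomputable def nnD (d : ℕ) (x : Fin d → ℤ) : ℝ :=
  if (∑ i, (x i).natAbs) = 1 then 1 / (2 * d) else 0

noncomputable def conv {d : ℕ} (f g : (Fin d → ℤ) → ℝ) (x : Fin d → ℤ) : ℝ :=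
  ∑' y : Fin d → ℤ, f y * g (x - y)

/-- `η₂[l](x) = ∑_u D^{*2}(u) D(x-u) ∑_{s'} D(s')^l D(u-s') D^{*2}(x-s')`. -/
noncomputable def eta2 (d l : ℕ) (x : Fin d → ℤ) : ℝ :=
  ∑' u : Fin d → ℤ,
    conv (nnD d) (nnD d) u * nnD d (x - u) *
      ∑' s' : Fin d → ℤ, nnD d s' ^ l * nnD d (u - s') * conv (nnD d) (nnD d) (x - s')

noncomputable def sv (d : ℕ) : ℝ := 1 / (2 * d)

def nrm {d : ℕ} (x : Fin d → ℤ) : ℕ := ∑ i, (x i).natAbs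

lemma nnD_def {d : ℕ} (x : Fin d → ℤ) : nnD d x = if nrm x = 1 then sv d else 0 := rfl

lemma nnD_one {d : ℕ} {x : Fin d → ℤ} (h : nrm x = 1) : nnD d x = sv d := by
  rw [nnD_def, if_pos h]

lemma nnD_zero {d : ℕ} {x : Fin d → ℤ} (h : nrm x ≠ 1) : nnD d x = 0 := by
  rw [nnD_def, if_neg h]

lemma nrm_single {d : ℕ} (p : Fin d) (a : ℤ) : nrm (Pi.single p a) = a.natAbs := by
  classical
  unfold nrm
  simp [Pi.single_apply, apply_ite Int.natAbs, Finset.sum_ite_eq']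

lemma nrm1 {d : ℕ} (v : Fin d → ℤ) (p : Fin d)
    (h : ∀ k, k ≠ p → v k = 0) : nrm v = (v p).natAbs := by
  classical
  unfold nrm
  rw [Finset.sum_eq_single p (fun b _ hb => by rw [h b hb, Int.natAbs_zero])
    (fun hp => absurd (Finset.mem_univ p) hp)]

lemma nrm2 {d : ℕ} (v : Fin d → ℤ) (p q : Fin d) (hpq : p ≠ q)
    (h : ∀ k, k ≠ p → k ≠ q → v k = 0) :
    nrm v = (v p).natAbs + (v q).natAbs := by
  classical
  unfold nrm
  rw [show (Finset.univ : Finset (Fin d)) = insert p {q} ∪ (Finset.univ \ insert p {q}) by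
    simp [Finset.union_sdiff_of_subset]]
  rw [Finset.sum_union (Finset.disjoint_sdiff), Finset.sum_insert (by simp [hpq]),
    Finset.sum_singleton]
  have : ∑ k ∈ Finset.univ \ insert p {q}, (v k).natAbs = 0 := by
    apply Finset.sum_eq_zero
    intro k hk
    simp only [Finset.mem_sdiff, Finset.mem_insert, Finset.mem_singleton, not_or] at hk
    rw [h k hk.2.1 hk.2.2, Int.natAbs_zero]
  omega

lemma nrm3 {d : ℕ} (v : Fin d → ℤ) (p q r : Fin d) (hpq : p ≠ q) (hpr : p ≠ r) (hqr : q ≠ r)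
    (h : ∀ k, k ≠ p → k ≠ q → k ≠ r → v k = 0) :
    nrm v = (v p).natAbs + (v q).natAbs + (v r).natAbs := by
  classical
  unfold nrm
  rw [show (Finset.univ : Finset (Fin d)) = insert p (insert q {r}) ∪ (Finset.univ \ insert p (insert q {r})) by
    simp [Finset.union_sdiff_of_subset]]
  rw [Finset.sum_union (Finset.disjoint_sdiff), Finset.sum_insert (by simp [hpq, hpr]),
    Finset.sum_insert (by simp [hqr]), Finset.sum_singleton]
  have : ∑ k ∈ Finset.univ \ insert p (insert q {r}), (v k).natAbs = 0 := by
    apply Finset.sum_eq_zero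
    intro k hk
    simp only [Finset.mem_sdiff, Finset.mem_insert, Finset.mem_singleton, not_or] at hk
    rw [h k hk.2.1 hk.2.2.1 hk.2.2.2, Int.natAbs_zero]
  omega

lemma nrm4 {d : ℕ} (v : Fin d → ℤ) (p q r t : Fin d) (hpq : p ≠ q) (hpr : p ≠ r) (hpt : p ≠ t)
    (hqr : q ≠ r) (hqt : q ≠ t) (hrt : r ≠ t)
    (h : ∀ k, k ≠ p → k ≠ q → k ≠ r → k ≠ t → v k = 0) :
    nrm v = (v p).natAbs + (v q).natAbs + (v r).natAbs + (v t).natAbs := by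
  classical
  unfold nrm
  rw [show (Finset.univ : Finset (Fin d)) = insert p (insert q (insert r {t})) ∪ (Finset.univ \ insert p (insert q (insert r {t}))) by
    simp [Finset.union_sdiff_of_subset]]
  rw [Finset.sum_union (Finset.disjoint_sdiff), Finset.sum_insert (by simp [hpq, hpr, hpt]),
    Finset.sum_insert (by simp [hqr, hqt]), Finset.sum_insert (by simp [hrt]), Finset.sum_singleton]
  have : ∑ k ∈ Finset.univ \ insert p (insert q (insert r {t})), (v k).natAbs = 0 := by
    apply Finset.sum_eq_zero
    intro k hk
    simp only [Finset.mem_sdiff, Finset.mem_insert, Finset.mem_singleton, not_or] at hk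
    rw [h k hk.2.1 hk.2.2.1 hk.2.2.2.1 hk.2.2.2.2, Int.natAbs_zero]
  omega

-- characterization
lemma eq_single_of_nrm_one {d : ℕ} {x : Fin d → ℤ} (h : nrm x = 1) :
    ∃ i : Fin d, x = Pi.single i 1 ∨ x = Pi.single i (-1) := by
  classical
  have hex : ∃ i, (x i).natAbs ≠ 0 := by
    by_contra hc
    push_neg at hc
    have : nrm x = 0 := Finset.sum_eq_zero fun i _ => hc i
    omega
  obtain ⟨i, hi⟩ := hex
  have hsplit : (x i).natAbs + ∑ j ∈ Finset.univ.erase i, (x j).natAbs = 1 := by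
    rw [Finset.add_sum_erase Finset.univ (fun j => (x j).natAbs) (Finset.mem_univ i)]; exact h
  have h1 : (x i).natAbs = 1 := by omega
  have h0 : ∑ j ∈ Finset.univ.erase i, (x j).natAbs = 0 := by omega
  have hz : ∀ j, j ≠ i → x j = 0 := by
    intro j hj
    have := (Finset.sum_eq_zero_iff).mp h0 j (by simp [hj])
    omega
  have hxeq : x = Pi.single i (x i) := by
    funext k
    by_cases hk : k = i
    · subst hk; simp
    · rw [hz k hk, Pi.single_eq_of_ne hk]
  rcases Int.natAbs_eq_iff.mp h1 with h2 | h2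
  · exact ⟨i, Or.inl (by rw [hxeq, h2]; norm_num)⟩
  · exact ⟨i, Or.inr (by rw [hxeq, h2]; norm_num)⟩

lemma single_one_ne_single_neg_one {d : ℕ} (i j : Fin d) :
    Pi.single i (1 : ℤ) ≠ (Pi.single j (-1) : Fin d → ℤ) := by
  intro hEq
  have := congrFun hEq i
  simp only [Pi.single_eq_same, Pi.single_apply] at this
  split_ifs at this <;> omega

lemma single_injective_val {d : ℕ} {c : ℤ} (hc : c ≠ 0) :
    Function.Injective (fun i : Fin d => Pi.single i c) := by
  intro i j hEq
  by_contra hij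
  have h2 := congrFun hEq i
  simp only at h2
  rw [Pi.single_eq_same, Pi.single_eq_of_ne (fun h : i = j => hij h)] at h2
  exact hc h2

lemma tsum_nnD_pow_mul {d l : ℕ} (hl : l ≠ 0) (f : (Fin d → ℤ) → ℝ) :
    ∑' x : Fin d → ℤ, nnD d x ^ l * f x
      = sv d ^ l * ∑ i : Fin d, (f (Pi.single i 1) + f (Pi.single i (-1))) := by
  classical
  set T : Finset (Fin d → ℤ) :=
    (Finset.univ.image fun i : Fin d => Pi.single i (1 : ℤ)) ∪
    (Finset.univ.image fun i : Fin d => Pi.single i (-1 : ℤ)) with hT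
  have hvan : ∀ x ∉ T, nnD d x ^ l * f x = 0 := by
    intro x hx
    by_cases h1 : nrm x = 1
    · exfalso
      apply hx
      obtain ⟨i, hi | hi⟩ := eq_single_of_nrm_one h1
      · exact Finset.mem_union_left _ (Finset.mem_image.mpr ⟨i, Finset.mem_univ i, hi.symm⟩)
      · exact Finset.mem_union_right _ (Finset.mem_image.mpr ⟨i, Finset.mem_univ i, hi.symm⟩)
    · rw [nnD_zero h1, zero_pow hl, zero_mul]
  rw [tsum_eq_sum hvan, hT,
    Finset.sum_union (by
      rw [Finset.disjoint_left]
      rintro a ha hb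
      simp only [Finset.mem_image, Finset.mem_univ, true_and] at ha hb
      obtain ⟨i, rfl⟩ := ha
      obtain ⟨j, hj⟩ := hb
      exact single_one_ne_single_neg_one i j hj.symm),
    Finset.sum_image (fun a _ b _ h => single_injective_val one_ne_zero h),
    Finset.sum_image (fun a _ b _ h => single_injective_val (by norm_num : (-1:ℤ) ≠ 0) h)]
  have e1 : ∀ i : Fin d, nnD d (Pi.single i (1:ℤ)) = sv d :=
    fun i => nnD_one (by rw [nrm_single]; rfl)
  have e2 : ∀ i : Fin d, nnD d (Pi.single i (-1:ℤ)) = sv d :=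
    fun i => nnD_one (by rw [nrm_single]; rfl)
  simp only [e1, e2]
  rw [Finset.mul_sum, ← Finset.sum_add_distrib]
  congr 1
  funext i
  ring

lemma conv_expand {d : ℕ} (w : Fin d → ℤ) :
    conv (nnD d) (nnD d) w
      = sv d * ∑ i : Fin d, (nnD d (w - Pi.single i 1) + nnD d (w - Pi.single i (-1))) := by
  have h := tsum_nnD_pow_mul (d := d) (l := 1) one_ne_zero (fun y => nnD d (w - y))
  simp only [pow_one] at h
  exact h

lemma nrm_add_le {d : ℕ} (a b : Fin d → ℤ) : nrm (a + b) ≤ nrm a + nrm b := by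
  unfold nrm
  rw [← Finset.sum_add_distrib]
  exact Finset.sum_le_sum fun i _ => Int.natAbs_add_le _ _

lemma conv_eq_zero {d : ℕ} {w : Fin d → ℤ} (h : 2 < nrm w) : conv (nnD d) (nnD d) w = 0 := by
  unfold conv
  have hz : ∀ y : Fin d → ℤ, nnD d y * nnD d (w - y) = 0 := by
    intro y
    by_cases h1 : nrm y = 1
    · by_cases h2 : nrm (w - y) = 1
      · exfalso
        have h3 := nrm_add_le y (w - y)
        rw [show y + (w - y) = w by abel] at h3
        omega
      · rw [nnD_zero h2, mul_zero]
    · rw [nnD_zero h1, zero_mul]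
  calc ∑' y : Fin d → ℤ, nnD d y * nnD d (w - y) = ∑' _ : Fin d → ℤ, (0:ℝ) := tsum_congr hz
    _ = 0 := tsum_zero

noncomputable def inr (d l : ℕ) (x u : Fin d → ℤ) : ℝ :=
  ∑' s' : Fin d → ℤ, nnD d s' ^ l * nnD d (u - s') * conv (nnD d) (nnD d) (x - s')

lemma inr_expand {d l : ℕ} (hl : l ≠ 0) (x u : Fin d → ℤ) :
    inr d l x u = sv d ^ l * ∑ j : Fin d,
        (nnD d (u - Pi.single j 1) * conv (nnD d) (nnD d) (x - Pi.single j 1)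
         + nnD d (u - Pi.single j (-1)) * conv (nnD d) (nnD d) (x - Pi.single j (-1))) := by
  unfold inr
  rw [tsum_congr (f := fun s' => nnD d s' ^ l * nnD d (u - s') * conv (nnD d) (nnD d) (x - s'))
    (g := fun s' => nnD d s' ^ l * (nnD d (u - s') * conv (nnD d) (nnD d) (x - s')))
    (fun s' => by ring)]
  exact tsum_nnD_pow_mul hl _

lemma eta2_expand {d l : ℕ} (hl : l ≠ 0) (x : Fin d → ℤ) :
    eta2 d l x = sv d * ∑ i : Fin d,
      (conv (nnD d) (nnD d) (x - Pi.single i 1) * inr d l x (x - Pi.single i 1)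
       + conv (nnD d) (nnD d) (x - Pi.single i (-1)) * inr d l x (x - Pi.single i (-1))) := by
  have h0 : eta2 d l x
      = ∑' u : Fin d → ℤ, conv (nnD d) (nnD d) u * nnD d (x - u) * inr d l x u := rfl
  rw [h0, ← (Equiv.subLeft x).tsum_eq
    (fun u => conv (nnD d) (nnD d) u * nnD d (x - u) * inr d l x u)]
  have h1 : ∀ v : Fin d → ℤ,
      conv (nnD d) (nnD d) (Equiv.subLeft x v) * nnD d (x - Equiv.subLeft x v)
          * inr d l x (Equiv.subLeft x v)
        = nnD d v ^ 1 * (conv (nnD d) (nnD d) (x - v) * inr d l x (x - v)) := by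
    intro v
    simp only [Equiv.subLeft_apply, sub_sub_cancel, pow_one]
    ring
  rw [tsum_congr h1, tsum_nnD_pow_mul one_ne_zero, pow_one]

-- sum helpers
lemma sum_fin_subset {d : ℕ} (T : Finset (Fin d)) (f : Fin d → ℝ)
    (h : ∀ i ∉ T, f i = 0) : ∑ i : Fin d, f i = ∑ i ∈ T, f i :=
  (Finset.sum_subset (Finset.subset_univ T) (fun i _ hi => h i hi)).symm

lemma sum_fin_const_except {d : ℕ} (hd : 1 ≤ d) (a : Fin d) (f : Fin d → ℝ) (c : ℝ)
    (h : ∀ i, i ≠ a → f i = c) : ∑ i : Fin d, f i = f a + ((d : ℝ) - 1) * c := by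
  classical
  rw [← Finset.add_sum_erase Finset.univ f (Finset.mem_univ a)]
  congr 1
  rw [Finset.sum_congr rfl (fun i hi => h i (Finset.ne_of_mem_erase hi)),
    Finset.sum_const, Finset.card_erase_of_mem (Finset.mem_univ a)]
  simp only [Finset.card_univ, Fintype.card_fin, nsmul_eq_mul]
  rw [Nat.cast_sub hd]
  norm_num

-- conv values
lemma conv_zero {d : ℕ} (hd : 1 ≤ d) : conv (nnD d) (nnD d) (0 : Fin d → ℤ) = sv d := by
  rw [conv_expand]
  have h : ∀ i : Fin d, nnD d ((0 : Fin d → ℤ) - Pi.single i 1)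
      + nnD d ((0 : Fin d → ℤ) - Pi.single i (-1)) = 2 * sv d := by
    intro i
    rw [nnD_one (x := (0 : Fin d → ℤ) - Pi.single i 1), nnD_one, two_mul]
    · rw [nrm1 _ i (fun k hk => by simp [Pi.single_eq_of_ne hk])]
      simp
    · rw [nrm1 _ i (fun k hk => by simp [Pi.single_eq_of_ne hk])]
      simp
  rw [Finset.sum_congr rfl (fun i _ => h i), Finset.sum_const]
  simp only [Finset.card_univ, Fintype.card_fin, nsmul_eq_mul]
  have hd' : (d : ℝ) ≠ 0 := by positivity
  unfold sv
  field_simp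

lemma conv_two_single {d : ℕ} (p : Fin d) :
    conv (nnD d) (nnD d) (Pi.single p 2) = sv d ^ 2 := by
  rw [conv_expand]
  rw [sum_fin_subset {p} _ (fun i hi => by
    have hip : i ≠ p := by simpa using hi
    rw [nnD_zero (x := Pi.single p 2 - Pi.single i 1), nnD_zero, add_zero]
    · rw [nrm2 _ p i (Ne.symm hip) (fun k h1 h2 => by simp [Pi.single_apply, h1, h2])]
      simp [Pi.single_apply, hip, Ne.symm hip]
    · rw [nrm2 _ p i (Ne.symm hip) (fun k h1 h2 => by simp [Pi.single_apply, h1, h2])]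
      simp [Pi.single_apply, hip, Ne.symm hip])]
  rw [Finset.sum_singleton]
  rw [nnD_one (x := Pi.single p 2 - Pi.single p 1), nnD_zero]
  · rw [add_zero]; ring
  · rw [nrm1 _ p (fun k h1 => by simp [Pi.single_apply, h1])]
    simp [Pi.single_apply]
  · rw [nrm1 _ p (fun k h1 => by simp [Pi.single_apply, h1])]
    simp [Pi.single_apply]

lemma conv_pair_add {d : ℕ} (p q : Fin d) (hpq : p ≠ q) :
    conv (nnD d) (nnD d) (Pi.single p 1 + Pi.single q 1) = 2 * sv d ^ 2 := by
  rw [conv_expand]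
  rw [sum_fin_subset {p, q} _ (fun i hi => by
    have hip : i ≠ p := by rintro rfl; simp at hi
    have hiq : i ≠ q := by rintro rfl; simp at hi
    rw [nnD_zero (x := Pi.single p 1 + Pi.single q 1 - Pi.single i 1), nnD_zero, add_zero]
    · rw [nrm3 _ p q i hpq (Ne.symm hip) (Ne.symm hiq)
        (fun k h1 h2 h3 => by simp [Pi.single_apply, h1, h2, h3])]
      simp [Pi.single_apply, hpq, Ne.symm hpq, hip, Ne.symm hip, hiq, Ne.symm hiq]
    · rw [nrm3 _ p q i hpq (Ne.symm hip) (Ne.symm hiq)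
        (fun k h1 h2 h3 => by simp [Pi.single_apply, h1, h2, h3])]
      simp [Pi.single_apply, hpq, Ne.symm hpq, hip, Ne.symm hip, hiq, Ne.symm hiq])]
  rw [Finset.sum_insert (by simp [hpq]), Finset.sum_singleton]
  rw [nnD_one (x := Pi.single p 1 + Pi.single q 1 - Pi.single p 1),
      nnD_zero (x := Pi.single p 1 + Pi.single q 1 - Pi.single p (-1)),
      nnD_one (x := Pi.single p 1 + Pi.single q 1 - Pi.single q 1),
      nnD_zero (x := Pi.single p 1 + Pi.single q 1 - Pi.single q (-1))]
  · ring
  · rw [nrm2 _ p q hpq (fun k h1 h2 => by simp [Pi.single_apply, h1, h2])]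
    simp [Pi.single_apply, hpq, Ne.symm hpq]
  · rw [nrm2 _ p q hpq (fun k h1 h2 => by simp [Pi.single_apply, h1, h2])]
    simp [Pi.single_apply, hpq, Ne.symm hpq]
  · rw [nrm2 _ p q hpq (fun k h1 h2 => by simp [Pi.single_apply, h1, h2])]
    simp [Pi.single_apply, hpq, Ne.symm hpq]
  · rw [nrm2 _ p q hpq (fun k h1 h2 => by simp [Pi.single_apply, h1, h2])]
    simp [Pi.single_apply, hpq, Ne.symm hpq]

lemma conv_pair_sub {d : ℕ} (p q : Fin d) (hpq : p ≠ q) :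
    conv (nnD d) (nnD d) (Pi.single p 1 - Pi.single q 1) = 2 * sv d ^ 2 := by
  rw [conv_expand]
  rw [sum_fin_subset {p, q} _ (fun i hi => by
    have hip : i ≠ p := by rintro rfl; simp at hi
    have hiq : i ≠ q := by rintro rfl; simp at hi
    rw [nnD_zero (x := Pi.single p 1 - Pi.single q 1 - Pi.single i 1), nnD_zero, add_zero]
    · rw [nrm3 _ p q i hpq (Ne.symm hip) (Ne.symm hiq)
        (fun k h1 h2 h3 => by simp [Pi.single_apply, h1, h2, h3])]
      simp [Pi.single_apply, hpq, Ne.symm hpq, hip, Ne.symm hip, hiq, Ne.symm hiq]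
    · rw [nrm3 _ p q i hpq (Ne.symm hip) (Ne.symm hiq)
        (fun k h1 h2 h3 => by simp [Pi.single_apply, h1, h2, h3])]
      simp [Pi.single_apply, hpq, Ne.symm hpq, hip, Ne.symm hip, hiq, Ne.symm hiq])]
  rw [Finset.sum_insert (by simp [hpq]), Finset.sum_singleton]
  rw [nnD_one (x := Pi.single p 1 - Pi.single q 1 - Pi.single p 1),
      nnD_zero (x := Pi.single p 1 - Pi.single q 1 - Pi.single p (-1)),
      nnD_zero (x := Pi.single p 1 - Pi.single q 1 - Pi.single q 1),
      nnD_one (x := Pi.single p 1 - Pi.single q 1 - Pi.single q (-1))]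
  · ring
  · rw [nrm1 _ p (fun k h1 => by
      by_cases h2 : k = q
      · subst h2; simp [Pi.single_apply, Ne.symm hpq]
      · simp [Pi.single_apply, h1, h2])]
    simp [Pi.single_apply, hpq, Ne.symm hpq]
  · rw [nrm2 _ p q hpq (fun k h1 h2 => by simp [Pi.single_apply, h1, h2])]
    simp [Pi.single_apply, hpq, Ne.symm hpq]
  · rw [nrm2 _ p q hpq (fun k h1 h2 => by simp [Pi.single_apply, h1, h2])]
    simp [Pi.single_apply, hpq, Ne.symm hpq]
  · rw [nrm2 _ p q hpq (fun k h1 h2 => by simp [Pi.single_apply, h1, h2])]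
    simp [Pi.single_apply, hpq, Ne.symm hpq]

lemma single_sub_neg_one {d : ℕ} (p i : Fin d) :
    (Pi.single p 1 : Fin d → ℤ) - Pi.single i (-1) = Pi.single p 1 + Pi.single i 1 := by
  funext k
  simp only [Pi.sub_apply, Pi.add_apply, Pi.single_apply]
  split_ifs <;> ring

lemma single_sub_neg_one_self {d : ℕ} (p : Fin d) :
    (Pi.single p 1 : Fin d → ℤ) - Pi.single p (-1) = Pi.single p 2 := by
  funext k
  simp only [Pi.sub_apply, Pi.single_apply]
  split_ifs <;> ring

set_option maxHeartbeats 1000000 in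
lemma eta2_single {d l : ℕ} (hd : 3 ≤ d) (hl : l ≠ 0) (p : Fin d) :
    eta2 d l (Pi.single p 1)
      = sv d ^ (l + 4) * (5 - 2 * sv d - 8 * sv d ^ 2) := by
  have hd1 : 1 ≤ d := by omega
  set s : ℝ := sv d with hs
  set x : Fin d → ℤ := Pi.single p 1 with hx
  -- conv values
  have hCp1 : conv (nnD d) (nnD d) (x - Pi.single p 1) = s := by
    rw [sub_self, conv_zero hd1]
  have hCp2 : conv (nnD d) (nnD d) (x - Pi.single p (-1)) = s ^ 2 := by
    rw [hx, single_sub_neg_one_self, conv_two_single]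
  have hC1 : ∀ i : Fin d, i ≠ p → conv (nnD d) (nnD d) (x - Pi.single i 1) = 2 * s ^ 2 :=
    fun i hi => conv_pair_sub p i (Ne.symm hi)
  have hC2 : ∀ i : Fin d, i ≠ p → conv (nnD d) (nnD d) (x - Pi.single i (-1)) = 2 * s ^ 2 := by
    intro i hi
    rw [hx, single_sub_neg_one, conv_pair_add p i (Ne.symm hi)]
  -- inr at u = 0
  have hI0 : inr d l x (x - Pi.single p 1)
      = s ^ l * ((s * s + s * s ^ 2) + ((d : ℝ) - 1) * (s * (2 * s ^ 2) + s * (2 * s ^ 2))) := by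
    rw [sub_self, inr_expand hl]
    congr 1
    rw [sum_fin_const_except hd1 p _ (s * (2 * s ^ 2) + s * (2 * s ^ 2)) (fun j hj => by
      rw [nnD_one (x := (0 : Fin d → ℤ) - Pi.single j 1) (by
          rw [nrm1 _ j (fun k hk => by simp [Pi.single_apply, hk])]
          simp),
        nnD_one (x := (0 : Fin d → ℤ) - Pi.single j (-1)) (by
          rw [nrm1 _ j (fun k hk => by simp [Pi.single_apply, hk])]
          simp),
        hC1 j hj, hC2 j hj])]
    rw [nnD_one (x := (0 : Fin d → ℤ) - Pi.single p 1) (by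
        rw [nrm1 _ p (fun k hk => by simp [Pi.single_apply, hk])]
        simp),
      nnD_one (x := (0 : Fin d → ℤ) - Pi.single p (-1)) (by
        rw [nrm1 _ p (fun k hk => by simp [Pi.single_apply, hk])]
        simp),
      hCp1, hCp2]
  -- inr at u = 2 e_p
  have hI2 : inr d l x (x - Pi.single p (-1)) = s ^ l * (s * s) := by
    rw [hx, single_sub_neg_one_self, inr_expand hl]
    have hsum : ∑ j : Fin d,
        (nnD d (Pi.single p 2 - Pi.single j 1) * conv (nnD d) (nnD d) (x - Pi.single j 1)
         + nnD d (Pi.single p 2 - Pi.single j (-1)) * conv (nnD d) (nnD d) (x - Pi.single j (-1)))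
        = s * s := by
      rw [sum_fin_subset {p} _ (fun j hj => by
        have hjp : j ≠ p := by simpa using hj
        rw [nnD_zero (x := Pi.single p 2 - Pi.single j 1) (by
            rw [nrm2 _ p j (Ne.symm hjp) (fun k h1 h2 => by simp [Pi.single_apply, h1, h2])]
            simp [Pi.single_apply, hjp, Ne.symm hjp]),
          nnD_zero (x := Pi.single p 2 - Pi.single j (-1)) (by
            rw [nrm2 _ p j (Ne.symm hjp) (fun k h1 h2 => by simp [Pi.single_apply, h1, h2])]
            simp [Pi.single_apply, hjp, Ne.symm hjp])]
        ring)]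
      rw [Finset.sum_singleton,
        nnD_one (x := Pi.single p 2 - Pi.single p 1) (by
          rw [nrm1 _ p (fun k hk => by simp [Pi.single_apply, hk])]
          simp [Pi.single_apply]),
        nnD_zero (x := Pi.single p 2 - Pi.single p (-1)) (by
          rw [nrm1 _ p (fun k hk => by simp [Pi.single_apply, hk])]
          simp [Pi.single_apply]),
        hCp1]
      ring
    rw [hsum]
  -- inr at u = e_p - e_i, i ≠ p
  have hIm : ∀ i : Fin d, i ≠ p →
      inr d l x (x - Pi.single i 1) = s ^ l * (s * s + s * (2 * s ^ 2)) := by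
    intro i hi
    rw [inr_expand hl]
    congr 1
    rw [sum_fin_subset {p, i} _ (fun j hj => by
      have hjp : j ≠ p := by rintro rfl; simp at hj
      have hji : j ≠ i := by rintro rfl; simp at hj
      rw [nnD_zero (x := x - Pi.single i 1 - Pi.single j 1) (by
          rw [nrm3 _ p i j (Ne.symm hi) (Ne.symm hjp) (Ne.symm hji)
            (fun k h1 h2 h3 => by simp [hx, Pi.single_apply, h1, h2, h3])]
          simp [hx, Pi.single_apply, hi, Ne.symm hi, hjp, Ne.symm hjp, hji, Ne.symm hji]),
        nnD_zero (x := x - Pi.single i 1 - Pi.single j (-1)) (by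
          rw [nrm3 _ p i j (Ne.symm hi) (Ne.symm hjp) (Ne.symm hji)
            (fun k h1 h2 h3 => by simp [hx, Pi.single_apply, h1, h2, h3])]
          simp [hx, Pi.single_apply, hi, Ne.symm hi, hjp, Ne.symm hjp, hji, Ne.symm hji])]
      ring)]
    rw [Finset.sum_insert (by simp [Ne.symm hi]), Finset.sum_singleton]
    rw [nnD_one (x := x - Pi.single i 1 - Pi.single p 1) (by
        rw [nrm1 _ i (fun k hk => by
          by_cases hkp : k = p
          · subst hkp; simp [hx, Pi.single_apply, hi, Ne.symm hi]
          · simp [hx, Pi.single_apply, hk, hkp])]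
        simp [hx, Pi.single_apply, hi, Ne.symm hi]),
      nnD_zero (x := x - Pi.single i 1 - Pi.single p (-1)) (by
        rw [nrm2 _ p i (Ne.symm hi) (fun k h1 h2 => by simp [hx, Pi.single_apply, h1, h2])]
        simp [hx, Pi.single_apply, hi, Ne.symm hi]),
      nnD_zero (x := x - Pi.single i 1 - Pi.single i 1) (by
        rw [nrm2 _ p i (Ne.symm hi) (fun k h1 h2 => by simp [hx, Pi.single_apply, h1, h2])]
        simp [hx, Pi.single_apply, hi, Ne.symm hi]),
      nnD_one (x := x - Pi.single i 1 - Pi.single i (-1)) (by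
        rw [nrm1 _ p (fun k hk => by
          by_cases hki : k = i
          · subst hki; simp [hx, Pi.single_apply, hi, Ne.symm hi]
          · simp [hx, Pi.single_apply, hk, hki])]
        simp [hx, Pi.single_apply, hi, Ne.symm hi]),
      hCp1, hCp2, hC2 i hi]
    ring
  -- inr at u = e_p + e_i, i ≠ p
  have hIp : ∀ i : Fin d, i ≠ p →
      inr d l x (x - Pi.single i (-1)) = s ^ l * (s * s + s * (2 * s ^ 2)) := by
    intro i hi
    rw [inr_expand hl]
    congr 1
    rw [sum_fin_subset {p, i} _ (fun j hj => by
      have hjp : j ≠ p := by rintro rfl; simp at hj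
      have hji : j ≠ i := by rintro rfl; simp at hj
      rw [nnD_zero (x := x - Pi.single i (-1) - Pi.single j 1) (by
          rw [nrm3 _ p i j (Ne.symm hi) (Ne.symm hjp) (Ne.symm hji)
            (fun k h1 h2 h3 => by simp [hx, Pi.single_apply, h1, h2, h3])]
          simp [hx, Pi.single_apply, hi, Ne.symm hi, hjp, Ne.symm hjp, hji, Ne.symm hji]),
        nnD_zero (x := x - Pi.single i (-1) - Pi.single j (-1)) (by
          rw [nrm3 _ p i j (Ne.symm hi) (Ne.symm hjp) (Ne.symm hji)
            (fun k h1 h2 h3 => by simp [hx, Pi.single_apply, h1, h2, h3])]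
          simp [hx, Pi.single_apply, hi, Ne.symm hi, hjp, Ne.symm hjp, hji, Ne.symm hji])]
      ring)]
    rw [Finset.sum_insert (by simp [Ne.symm hi]), Finset.sum_singleton]
    rw [nnD_one (x := x - Pi.single i (-1) - Pi.single p 1) (by
        rw [nrm1 _ i (fun k hk => by
          by_cases hkp : k = p
          · subst hkp; simp [hx, Pi.single_apply, hi, Ne.symm hi]
          · simp [hx, Pi.single_apply, hk, hkp])]
        simp [hx, Pi.single_apply, hi, Ne.symm hi]),
      nnD_zero (x := x - Pi.single i (-1) - Pi.single p (-1)) (by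
        rw [nrm2 _ p i (Ne.symm hi) (fun k h1 h2 => by simp [hx, Pi.single_apply, h1, h2])]
        simp [hx, Pi.single_apply, hi, Ne.symm hi]),
      nnD_one (x := x - Pi.single i (-1) - Pi.single i 1) (by
        rw [nrm1 _ p (fun k hk => by
          by_cases hki : k = i
          · subst hki; simp [hx, Pi.single_apply, hi, Ne.symm hi]
          · simp [hx, Pi.single_apply, hk, hki])]
        simp [hx, Pi.single_apply, hi, Ne.symm hi]),
      nnD_zero (x := x - Pi.single i (-1) - Pi.single i (-1)) (by
        rw [nrm2 _ p i (Ne.symm hi) (fun k h1 h2 => by simp [hx, Pi.single_apply, h1, h2])]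
        simp [hx, Pi.single_apply, hi, Ne.symm hi]),
      hCp1, hCp2, hC1 i hi]
    ring
  -- assemble
  rw [eta2_expand hl x]
  rw [sum_fin_const_except hd1 p _
    ((2 * s ^ 2) * (s ^ l * (s * s + s * (2 * s ^ 2)))
      + (2 * s ^ 2) * (s ^ l * (s * s + s * (2 * s ^ 2))))
    (fun i hi => by rw [hC1 i hi, hC2 i hi, hIm i hi, hIp i hi])]
  rw [hCp1, hCp2, hI0, hI2]
  have hds : (2 * (d : ℝ)) ≠ 0 := by
    have : (0:ℝ) < (d:ℝ) := by exact_mod_cast Nat.lt_of_lt_of_le Nat.zero_lt_one hd1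
    positivity
  simp only [← hs]
  rw [pow_add]
  have hsd : s = 1 / (2 * (d:ℝ)) := rfl
  rw [hsd]
  field_simp
  ring

set_option maxHeartbeats 1000000 in
lemma eta2_pair {d l : ℕ} (hd : 3 ≤ d) (hl : l ≠ 0) (p q : Fin d) (hpq : p ≠ q) :
    eta2 d l (Pi.single p 2 + Pi.single q 1) = 8 * sv d ^ (l + 6) := by
  have hd1 : 1 ≤ d := by omega
  set s : ℝ := sv d with hs
  set x : Fin d → ℤ := Pi.single p 2 + Pi.single q 1 with hx
  have ida : x - Pi.single p 1 = Pi.single p 1 + Pi.single q 1 := by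
    funext k
    simp only [hx, Pi.sub_apply, Pi.add_apply, Pi.single_apply]
    split_ifs <;> ring
  have idb : x - Pi.single q 1 = Pi.single p 2 := by
    funext k
    simp only [hx, Pi.sub_apply, Pi.add_apply, Pi.single_apply]
    split_ifs <;> ring
  -- conv values
  have hCp1 : conv (nnD d) (nnD d) (x - Pi.single p 1) = 2 * s ^ 2 := by
    rw [ida, conv_pair_add p q hpq]
  have hCq1 : conv (nnD d) (nnD d) (x - Pi.single q 1) = s ^ 2 := by
    rw [idb, conv_two_single]
  have hCp2 : conv (nnD d) (nnD d) (x - Pi.single p (-1)) = 0 := by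
    apply conv_eq_zero
    rw [nrm2 _ p q hpq (fun k h1 h2 => by simp [hx, Pi.single_apply, h1, h2])]
    simp [hx, Pi.single_apply, hpq, Ne.symm hpq]
  have hCq2 : conv (nnD d) (nnD d) (x - Pi.single q (-1)) = 0 := by
    apply conv_eq_zero
    rw [nrm2 _ p q hpq (fun k h1 h2 => by simp [hx, Pi.single_apply, h1, h2])]
    simp [hx, Pi.single_apply, hpq, Ne.symm hpq]
  -- inr at u = e_p + e_q
  have hIp : inr d l x (x - Pi.single p 1) = s ^ l * (s * (2 * s ^ 2) + s * s ^ 2) := by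
    rw [inr_expand hl]
    congr 1
    rw [sum_fin_subset {p, q} _ (fun j hj => by
      have hjp : j ≠ p := by rintro rfl; simp at hj
      have hjq : j ≠ q := by rintro rfl; simp at hj
      rw [nnD_zero (x := x - Pi.single p 1 - Pi.single j 1) (by
          rw [nrm3 _ p q j hpq (Ne.symm hjp) (Ne.symm hjq)
            (fun k h1 h2 h3 => by simp [hx, Pi.single_apply, h1, h2, h3])]
          simp [hx, Pi.single_apply, hpq, Ne.symm hpq, hjp, Ne.symm hjp, hjq, Ne.symm hjq]),
        nnD_zero (x := x - Pi.single p 1 - Pi.single j (-1)) (by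
          rw [nrm3 _ p q j hpq (Ne.symm hjp) (Ne.symm hjq)
            (fun k h1 h2 h3 => by simp [hx, Pi.single_apply, h1, h2, h3])]
          simp [hx, Pi.single_apply, hpq, Ne.symm hpq, hjp, Ne.symm hjp, hjq, Ne.symm hjq])]
      ring)]
    rw [Finset.sum_insert (by simp [hpq]), Finset.sum_singleton]
    rw [nnD_one (x := x - Pi.single p 1 - Pi.single p 1) (by
        rw [nrm2 _ p q hpq (fun k h1 h2 => by simp [hx, Pi.single_apply, h1, h2])]
        simp [hx, Pi.single_apply, hpq, Ne.symm hpq]),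
      nnD_zero (x := x - Pi.single p 1 - Pi.single p (-1)) (by
        rw [nrm2 _ p q hpq (fun k h1 h2 => by simp [hx, Pi.single_apply, h1, h2])]
        simp [hx, Pi.single_apply, hpq, Ne.symm hpq]),
      nnD_one (x := x - Pi.single p 1 - Pi.single q 1) (by
        rw [nrm2 _ p q hpq (fun k h1 h2 => by simp [hx, Pi.single_apply, h1, h2])]
        simp [hx, Pi.single_apply, hpq, Ne.symm hpq]),
      nnD_zero (x := x - Pi.single p 1 - Pi.single q (-1)) (by
        rw [nrm2 _ p q hpq (fun k h1 h2 => by simp [hx, Pi.single_apply, h1, h2])]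
        simp [hx, Pi.single_apply, hpq, Ne.symm hpq]),
      hCp1, hCq1]
    ring
  -- inr at u = 2 e_p
  have hIq : inr d l x (x - Pi.single q 1) = s ^ l * (s * (2 * s ^ 2)) := by
    rw [inr_expand hl]
    congr 1
    rw [sum_fin_subset {p} _ (fun j hj => by
      have hjp : j ≠ p := by simpa using hj
      by_cases hjq : j = q
      · rw [nnD_zero (x := x - Pi.single q 1 - Pi.single j 1) (by
            rw [hjq, nrm2 _ p q hpq (fun k h1 h2 => by simp [hx, Pi.single_apply, h1, h2])]
            simp [hx, Pi.single_apply, hpq, Ne.symm hpq]),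
          nnD_zero (x := x - Pi.single q 1 - Pi.single j (-1)) (by
            rw [hjq, nrm2 _ p q hpq (fun k h1 h2 => by simp [hx, Pi.single_apply, h1, h2])]
            simp [hx, Pi.single_apply, hpq, Ne.symm hpq])]
        ring
      · rw [nnD_zero (x := x - Pi.single q 1 - Pi.single j 1) (by
            rw [nrm3 _ p q j hpq (Ne.symm hjp) (Ne.symm hjq)
              (fun k h1 h2 h3 => by simp [hx, Pi.single_apply, h1, h2, h3])]
            simp [hx, Pi.single_apply, hpq, Ne.symm hpq, hjp, Ne.symm hjp, hjq, Ne.symm hjq]),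
          nnD_zero (x := x - Pi.single q 1 - Pi.single j (-1)) (by
            rw [nrm3 _ p q j hpq (Ne.symm hjp) (Ne.symm hjq)
              (fun k h1 h2 h3 => by simp [hx, Pi.single_apply, h1, h2, h3])]
            simp [hx, Pi.single_apply, hpq, Ne.symm hpq, hjp, Ne.symm hjp, hjq, Ne.symm hjq])]
        ring)]
    rw [Finset.sum_singleton]
    rw [nnD_one (x := x - Pi.single q 1 - Pi.single p 1) (by
        rw [nrm2 _ p q hpq (fun k h1 h2 => by simp [hx, Pi.single_apply, h1, h2])]
        simp [hx, Pi.single_apply, hpq, Ne.symm hpq]),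
      nnD_zero (x := x - Pi.single q 1 - Pi.single p (-1)) (by
        rw [nrm2 _ p q hpq (fun k h1 h2 => by simp [hx, Pi.single_apply, h1, h2])]
        simp [hx, Pi.single_apply, hpq, Ne.symm hpq]),
      hCp1]
    ring
  -- assemble
  rw [eta2_expand hl x]
  rw [sum_fin_subset {p, q} _ (fun i hi => by
    have hip : i ≠ p := by rintro rfl; simp at hi
    have hiq : i ≠ q := by rintro rfl; simp at hi
    rw [conv_eq_zero (w := x - Pi.single i 1) (by
        rw [nrm3 _ p q i hpq (Ne.symm hip) (Ne.symm hiq)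
          (fun k h1 h2 h3 => by simp [hx, Pi.single_apply, h1, h2, h3])]
        simp [hx, Pi.single_apply, hpq, Ne.symm hpq, hip, Ne.symm hip, hiq, Ne.symm hiq]),
      conv_eq_zero (w := x - Pi.single i (-1)) (by
        rw [nrm3 _ p q i hpq (Ne.symm hip) (Ne.symm hiq)
          (fun k h1 h2 h3 => by simp [hx, Pi.single_apply, h1, h2, h3])]
        simp [hx, Pi.single_apply, hpq, Ne.symm hpq, hip, Ne.symm hip, hiq, Ne.symm hiq])]
    ring)]
  rw [Finset.sum_insert (by simp [hpq]), Finset.sum_singleton]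
  rw [hCp1, hCp2, hCq1, hCq2, hIp, hIq]
  rw [pow_add]
  ring

set_option maxHeartbeats 1000000 in
lemma eta2_triple {d l : ℕ} (hd : 3 ≤ d) (hl : l ≠ 0) (p q r : Fin d)
    (hpq : p ≠ q) (hpr : p ≠ r) (hqr : q ≠ r) :
    eta2 d l (Pi.single p 1 + Pi.single q 1 + Pi.single r 1) = 24 * sv d ^ (l + 6) := by
  have hd1 : 1 ≤ d := by omega
  set s : ℝ := sv d with hs
  set x : Fin d → ℤ := Pi.single p 1 + Pi.single q 1 + Pi.single r 1 with hx
  -- generic conv values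
  have hC1 : ∀ a b c : Fin d, a ≠ b → a ≠ c → b ≠ c →
      x = Pi.single a 1 + Pi.single b 1 + Pi.single c 1 →
      conv (nnD d) (nnD d) (x - Pi.single a 1) = 2 * s ^ 2 := by
    intro a b c hab hac hbc habc
    have hid : x - Pi.single a 1 = Pi.single b 1 + Pi.single c 1 := by
      funext k
      simp only [habc, Pi.sub_apply, Pi.add_apply, Pi.single_apply]
      split_ifs <;> ring
    rw [hid, conv_pair_add b c hbc]
  have hC2 : ∀ a b c : Fin d, a ≠ b → a ≠ c → b ≠ c →
      x = Pi.single a 1 + Pi.single b 1 + Pi.single c 1 →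
      conv (nnD d) (nnD d) (x - Pi.single a (-1)) = 0 := by
    intro a b c hab hac hbc habc
    apply conv_eq_zero
    rw [nrm3 _ a b c hab hac hbc
      (fun k h1 h2 h3 => by simp [habc, Pi.single_apply, h1, h2, h3])]
    simp [habc, Pi.single_apply, hab, Ne.symm hab, hac, Ne.symm hac, hbc, Ne.symm hbc]
  -- generic inr value
  have hI : ∀ a b c : Fin d, a ≠ b → a ≠ c → b ≠ c →
      x = Pi.single a 1 + Pi.single b 1 + Pi.single c 1 →
      inr d l x (x - Pi.single a 1)
        = s ^ l * (s * conv (nnD d) (nnD d) (x - Pi.single b 1)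
            + s * conv (nnD d) (nnD d) (x - Pi.single c 1)) := by
    intro a b c hab hac hbc habc
    rw [inr_expand hl]
    congr 1
    rw [sum_fin_subset {b, c} _ (fun j hj => by
      have hjb : j ≠ b := by rintro rfl; simp at hj
      have hjc : j ≠ c := by rintro rfl; simp at hj
      by_cases hja : j = a
      · rw [nnD_zero (x := x - Pi.single a 1 - Pi.single j 1) (by
            rw [hja, nrm3 _ a b c hab hac hbc
              (fun k h1 h2 h3 => by simp [habc, Pi.single_apply, h1, h2, h3])]
            simp [habc, Pi.single_apply, hab, Ne.symm hab, hac, Ne.symm hac, hbc, Ne.symm hbc]),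
          nnD_zero (x := x - Pi.single a 1 - Pi.single j (-1)) (by
            rw [hja, nrm3 _ a b c hab hac hbc
              (fun k h1 h2 h3 => by simp [habc, Pi.single_apply, h1, h2, h3])]
            simp [habc, Pi.single_apply, hab, Ne.symm hab, hac, Ne.symm hac, hbc, Ne.symm hbc])]
        ring
      · rw [nnD_zero (x := x - Pi.single a 1 - Pi.single j 1) (by
            rw [nrm4 _ a b c j hab hac (Ne.symm hja) hbc (Ne.symm hjb) (Ne.symm hjc)
              (fun k h1 h2 h3 h4 => by simp [habc, Pi.single_apply, h1, h2, h3, h4])]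
            simp [habc, Pi.single_apply, hab, Ne.symm hab, hac, Ne.symm hac, hbc, Ne.symm hbc,
              hja, Ne.symm hja, hjb, Ne.symm hjb, hjc, Ne.symm hjc]),
          nnD_zero (x := x - Pi.single a 1 - Pi.single j (-1)) (by
            rw [nrm4 _ a b c j hab hac (Ne.symm hja) hbc (Ne.symm hjb) (Ne.symm hjc)
              (fun k h1 h2 h3 h4 => by simp [habc, Pi.single_apply, h1, h2, h3, h4])]
            simp [habc, Pi.single_apply, hab, Ne.symm hab, hac, Ne.symm hac, hbc, Ne.symm hbc,
              hja, Ne.symm hja, hjb, Ne.symm hjb, hjc, Ne.symm hjc])]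
        ring)]
    rw [Finset.sum_insert (by simp [hbc]), Finset.sum_singleton]
    rw [nnD_one (x := x - Pi.single a 1 - Pi.single b 1) (by
        rw [nrm3 _ a b c hab hac hbc
          (fun k h1 h2 h3 => by simp [habc, Pi.single_apply, h1, h2, h3])]
        simp [habc, Pi.single_apply, hab, Ne.symm hab, hac, Ne.symm hac, hbc, Ne.symm hbc]),
      nnD_zero (x := x - Pi.single a 1 - Pi.single b (-1)) (by
        rw [nrm3 _ a b c hab hac hbc
          (fun k h1 h2 h3 => by simp [habc, Pi.single_apply, h1, h2, h3])]
        simp [habc, Pi.single_apply, hab, Ne.symm hab, hac, Ne.symm hac, hbc, Ne.symm hbc]),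
      nnD_one (x := x - Pi.single a 1 - Pi.single c 1) (by
        rw [nrm3 _ a b c hab hac hbc
          (fun k h1 h2 h3 => by simp [habc, Pi.single_apply, h1, h2, h3])]
        simp [habc, Pi.single_apply, hab, Ne.symm hab, hac, Ne.symm hac, hbc, Ne.symm hbc]),
      nnD_zero (x := x - Pi.single a 1 - Pi.single c (-1)) (by
        rw [nrm3 _ a b c hab hac hbc
          (fun k h1 h2 h3 => by simp [habc, Pi.single_apply, h1, h2, h3])]
        simp [habc, Pi.single_apply, hab, Ne.symm hab, hac, Ne.symm hac, hbc, Ne.symm hbc])]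
    ring
  -- permuted forms of x
  have hxp : x = Pi.single p 1 + Pi.single q 1 + Pi.single r 1 := hx
  have hxq : x = Pi.single q 1 + Pi.single p 1 + Pi.single r 1 := by rw [hx]; abel
  have hxr : x = Pi.single r 1 + Pi.single q 1 + Pi.single p 1 := by rw [hx]; abel
  -- assemble
  rw [eta2_expand hl x]
  rw [sum_fin_subset {p, q, r} _ (fun i hi => by
    have hip : i ≠ p := by rintro rfl; simp at hi
    have hiq : i ≠ q := by rintro rfl; simp at hi
    have hir : i ≠ r := by rintro rfl; simp at hi
    rw [conv_eq_zero (w := x - Pi.single i 1) (by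
        rw [nrm4 _ p q r i hpq hpr (Ne.symm hip) hqr (Ne.symm hiq) (Ne.symm hir)
          (fun k h1 h2 h3 h4 => by simp [hx, Pi.single_apply, h1, h2, h3, h4])]
        simp [hx, Pi.single_apply, hpq, Ne.symm hpq, hpr, Ne.symm hpr, hqr, Ne.symm hqr,
          hip, Ne.symm hip, hiq, Ne.symm hiq, hir, Ne.symm hir]),
      conv_eq_zero (w := x - Pi.single i (-1)) (by
        rw [nrm4 _ p q r i hpq hpr (Ne.symm hip) hqr (Ne.symm hiq) (Ne.symm hir)
          (fun k h1 h2 h3 h4 => by simp [hx, Pi.single_apply, h1, h2, h3, h4])]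
        simp [hx, Pi.single_apply, hpq, Ne.symm hpq, hpr, Ne.symm hpr, hqr, Ne.symm hqr,
          hip, Ne.symm hip, hiq, Ne.symm hiq, hir, Ne.symm hir])]
    ring)]
  rw [Finset.sum_insert (by simp [hpq, hpr]), Finset.sum_insert (by simp [hqr]),
    Finset.sum_singleton]
  rw [hI p q r hpq hpr hqr hxp, hI q p r (Ne.symm hpq) hqr hpr hxq,
    hI r q p (Ne.symm hqr) (Ne.symm hpr) (Ne.symm hpq) hxr,
    hC1 p q r hpq hpr hqr hxp, hC1 q p r (Ne.symm hpq) hqr hpr hxq,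
    hC1 r q p (Ne.symm hqr) (Ne.symm hpr) (Ne.symm hpq) hxr,
    hC2 p q r hpq hpr hqr hxp, hC2 q p r (Ne.symm hpq) hqr hpr hxq,
    hC2 r q p (Ne.symm hqr) (Ne.symm hpr) (Ne.symm hpq) hxr]
  rw [pow_add]
  ring


/-- Values of `η₂[l]` at `e₁`, `2e₁+e₂` and `e₁+e₂+e₃`, with `s = 1/(2d)`. -/
theorem eta2_values (d l : ℕ) (hd : 3 ≤ d) (hl : 1 ≤ l) :
    eta2 d l (Pi.single (⟨0, by omega⟩ : Fin d) 1)
      = (1 / (2 * (d : ℝ))) ^ (l + 4) *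
          (5 - 2 * (1 / (2 * (d : ℝ))) - 8 * (1 / (2 * (d : ℝ))) ^ 2) ∧
    eta2 d l (Pi.single (⟨0, by omega⟩ : Fin d) 2 + Pi.single (⟨1, by omega⟩ : Fin d) 1)
      = 8 * (1 / (2 * (d : ℝ))) ^ (l + 6) ∧
    eta2 d l (Pi.single (⟨0, by omega⟩ : Fin d) 1 + Pi.single (⟨1, by omega⟩ : Fin d) 1
        + Pi.single (⟨2, by omega⟩ : Fin d) 1)
      = 24 * (1 / (2 * (d : ℝ))) ^ (l + 6) := by
  have hl' : l ≠ 0 := by omega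
  have h01 : (⟨0, by omega⟩ : Fin d) ≠ (⟨1, by omega⟩ : Fin d) := by
    intro h; exact absurd (congrArg Fin.val h) (by norm_num)
  have h02 : (⟨0, by omega⟩ : Fin d) ≠ (⟨2, by omega⟩ : Fin d) := by
    intro h; exact absurd (congrArg Fin.val h) (by norm_num)
  have h12 : (⟨1, by omega⟩ : Fin d) ≠ (⟨2, by omega⟩ : Fin d) := by
    intro h; exact absurd (congrArg Fin.val h) (by norm_num)
  refine ⟨eta2_single hd hl' _, eta2_pair hd hl' _ _ h01, eta2_triple hd hl' _ _ _ h01 h02 h12⟩
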